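/- arXiv:1611.06357 — 2 statements merged into one kernel-verified Lean document; each statement's English description precedes it below -/
import Mathlib

section
/- Let n be even, m > 1, k = 2^{m−1}, and let f : 𝔽₂ⁿ → ℤ_{2^m} be an anti-self-dual bent generalized Boolean function with coefficient functions a₀,…,a_{k−1}. Define G₀,…,G_{k−1} : 𝔽₂ⁿ → ℤ pointwise by (G₀(x),…,G_{k−1}(x))ᵀ = H_{m−1}·(a₀(x),…,a_{k−1}(x))ᵀ. Then each Gᵢ takes values in {±1} and is the sign function of an anti-self-dual bent Boolean function in n variables. -/
open Finset Matrix

/-- Dot product on 𝔽₂ⁿ. -/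
def dotp {n : ℕ} (u x : Fin n → ZMod 2) : ZMod 2 := ∑ j, u j * x j

/-- The character (−1)^{u·x}. -/
def chi {n : ℕ} (u x : Fin n → ZMod 2) : ℤ := (-1) ^ (dotp u x).val

/-- Walsh–Hadamard transform of a Boolean function. -/
def Wbf {n : ℕ} (g : (Fin n → ZMod 2) → ZMod 2) (u : Fin n → ZMod 2) : ℤ :=
  ∑ x : Fin n → ZMod 2, chi u x * (-1) ^ (g x).val

/-- A Boolean function in an even number `n` of variables is bent. -/
def IsBentBF {n : ℕ} (g : (Fin n → ZMod 2) → ZMod 2) : Prop :=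
  ∀ u, Wbf g u = 2 ^ (n / 2) ∨ Wbf g u = -(2 ^ (n / 2))

/-- `ghat` is the dual of the bent Boolean function `g`. -/
def IsDualBF {n : ℕ} (g ghat : (Fin n → ZMod 2) → ZMod 2) : Prop :=
  ∀ u, Wbf g u = 2 ^ (n / 2) * (-1) ^ (ghat u).val

/-- Walsh–Hadamard transform of a generalized Boolean function. -/
noncomputable def Wgbf {n m : ℕ} (ω : ℂ) (f : (Fin n → ZMod 2) → ZMod (2 ^ m)) (u : Fin n → ZMod 2) : ℂ :=
  ∑ x : Fin n → ZMod 2, (chi u x : ℂ) * ω ^ (f x).val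

/-- A generalized Boolean function is bent. -/
def IsGBent {n m : ℕ} (ω : ℂ) (f : (Fin n → ZMod 2) → ZMod (2 ^ m)) : Prop :=
  ∀ u, ‖Wgbf ω f u‖ = Real.sqrt 2 ^ n

/-- A generalized Boolean function is regular bent. -/
def IsRegularGBent {n m : ℕ} (ω : ℂ) (f : (Fin n → ZMod 2) → ZMod (2 ^ m)) : Prop :=
  IsGBent ω f ∧ ∃ fhat : (Fin n → ZMod 2) → ZMod (2 ^ m),
    ∀ u, Wgbf ω f u = (Real.sqrt 2 : ℂ) ^ n * ω ^ (fhat u).val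

/-- The Sylvester Hadamard matrix of order 2^s. -/
def sylvester (s : ℕ) : Matrix (Fin (2 ^ s)) (Fin (2 ^ s)) ℤ :=
  Matrix.of fun i j => (-1) ^ ∑ t ∈ Finset.range s, ((i.val >>> t) % 2) * ((j.val >>> t) % 2)

/-- The Hadamard property for a system of 2^s ±1-valued functions. -/
def HadamardProperty {n : ℕ} (s : ℕ) (G : Fin (2 ^ s) → (Fin n → ZMod 2) → ℤ) : Prop :=
  ∀ x, ∃ ε : ℤ, (ε = 1 ∨ ε = -1) ∧ ∃ c : Fin (2 ^ s),
    (sylvester s).mulVec (fun i => G i x) = fun i => ε * sylvester s i c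

/-- A generalized Boolean function is anti-self-dual bent. -/
def IsAntiSelfDualGBent {n m : ℕ} (ω : ℂ) (f : (Fin n → ZMod 2) → ZMod (2 ^ m)) : Prop :=
  ∀ u, Wgbf ω f u = -((Real.sqrt 2 : ℂ) ^ n * ω ^ (f u).val)

/-- A Boolean function is anti-self-dual bent. -/
def IsAntiSelfDualBF {n : ℕ} (g : (Fin n → ZMod 2) → ZMod 2) : Prop :=
  IsBentBF g ∧ ∀ u, Wbf g u = -(2 ^ (n / 2) * (-1) ^ (g u).val)


-- linear independence of 1, ω, ..., ω^{2^{m-1}-1} over ℤ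
lemma powers_lin_indep {m : ℕ} (hm : 0 < m) {ω : ℂ} (hω : IsPrimitiveRoot ω (2 ^ m))
    {c : Fin (2 ^ (m - 1)) → ℤ} (hc : ∑ i, (c i : ℂ) * ω ^ (i : ℕ) = 0) : ∀ i, c i = 0 := by
  have hpos : 0 < 2 ^ m := pow_pos two_pos m
  have hmin : Polynomial.cyclotomic (2 ^ m) ℚ = minpoly ℚ ω :=
    Polynomial.cyclotomic_eq_minpoly_rat hω hpos
  have hdeg : (minpoly ℚ ω).natDegree = 2 ^ (m - 1) := by
    rw [← hmin, Polynomial.natDegree_cyclotomic, Nat.totient_prime_pow Nat.prime_two hm]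
    simp
  have hli := linearIndependent_pow (K := ℚ) (S := ℂ) ω
  have hli2 : LinearIndependent ℚ fun i : Fin (2 ^ (m - 1)) => ω ^ (i : ℕ) := by
    have := hli.comp (finCongr hdeg.symm) (finCongr hdeg.symm).injective
    exact this
  have := Fintype.linearIndependent_iff.mp hli2 (fun i => (c i : ℚ))
  intro i
  have h0 : ((c i : ℚ)) = 0 := by
    apply this _ i
    rw [← hc]
    apply Finset.sum_congr rfl
    intro j _
    rw [Rat.smul_def]
    push_cast
    ring
  exact_mod_cast h0

lemma omega_half {m : ℕ} (hm : 0 < m) {ω : ℂ} (hω : IsPrimitiveRoot ω (2 ^ m)) :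
    ω ^ (2 ^ (m - 1)) = -1 := by
  have h2 : (ω ^ (2 ^ (m - 1))) ^ 2 = 1 := by
    rw [← pow_mul, ← pow_succ, Nat.sub_add_cancel hm]
    exact hω.pow_eq_one
  rcases sq_eq_one_iff.mp h2 with h | h
  · exact absurd h (hω.pow_ne_one_of_pos_of_lt (pow_pos two_pos _).ne'
      (Nat.pow_lt_pow_right one_lt_two (Nat.sub_lt hm one_pos)))
  · exact h

lemma delta_form {n m : ℕ} (hm : 0 < m) {ω : ℂ} (hω : IsPrimitiveRoot ω (2 ^ m))
    (f : (Fin n → ZMod 2) → ZMod (2 ^ m))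
    (a : Fin (2 ^ (m - 1)) → (Fin n → ZMod 2) → ℤ)
    (ha : ∀ x, ω ^ (f x).val = ∑ i : Fin (2 ^ (m - 1)), (a i x : ℂ) * ω ^ (i : ℕ))
    (x : Fin n → ZMod 2) :
    ∃ ε : ℤ, (ε = 1 ∨ ε = -1) ∧ ∃ c : Fin (2 ^ (m - 1)),
      ∀ j, a j x = if j = c then ε else 0 := by
  have hpos : 0 < 2 ^ m := pow_pos two_pos m
  haveI : NeZero (2 ^ m) := ⟨hpos.ne'⟩
  have hv : (f x).val < 2 ^ m := ZMod.val_lt _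
  have hsplit : 2 ^ m = 2 ^ (m - 1) * 2 := by
    rw [← pow_succ, Nat.sub_add_cancel hm]
  -- helper: if ω^{f x} = ε ωᶜ then a is the delta at c with value ε
  have key : ∀ (ε : ℤ) (c : Fin (2 ^ (m - 1))),
      ω ^ (f x).val = (ε : ℂ) * ω ^ (c : ℕ) → ∀ j, a j x = if j = c then ε else 0 := by
    intro ε c hεc j
    have hsum : ∑ i : Fin (2 ^ (m - 1)),
        ((a i x - if i = c then ε else 0 : ℤ) : ℂ) * ω ^ (i : ℕ) = 0 := by
      push_cast
      simp_rw [sub_mul]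
      rw [Finset.sum_sub_distrib]
      have h1 : ∑ i : Fin (2 ^ (m - 1)),
          ((if i = c then (ε:ℂ) else 0)) * ω ^ (i : ℕ) = (ε : ℂ) * ω ^ (c : ℕ) := by
        rw [Finset.sum_eq_single c]
        · simp
        · intro b _ hb; simp [hb]
        · simp
      rw [← ha x, h1, hεc, sub_self]
    have := powers_lin_indep hm hω hsum j
    omega
  by_cases hlt : (f x).val < 2 ^ (m - 1)
  · refine ⟨1, Or.inl rfl, ⟨(f x).val, hlt⟩, key 1 _ ?_⟩
    simp
  · push_neg at hlt
    have hc : (f x).val - 2 ^ (m - 1) < 2 ^ (m - 1) := by omega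
    refine ⟨-1, Or.inr rfl, ⟨(f x).val - 2 ^ (m - 1), hc⟩, key (-1) _ ?_⟩
    have hfv : (f x).val = 2 ^ (m - 1) + ((f x).val - 2 ^ (m - 1)) := by omega
    simp only [Fin.val_mk]
    conv_lhs => rw [hfv]
    rw [pow_add, omega_half hm hω]
    push_cast
    ring

lemma sqrt_two_pow_even {n : ℕ} (hn : Even n) :
    (Real.sqrt 2 : ℂ) ^ n = (2 : ℂ) ^ (n / 2) := by
  obtain ⟨t, rfl⟩ := hn
  have h2 : (Real.sqrt 2 : ℂ) ^ 2 = 2 := by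
    rw [← Complex.ofReal_pow, Real.sq_sqrt (by norm_num)]
    norm_num
  have : t + t = 2 * t := by ring
  rw [this, pow_mul, h2]
  congr 1
  omega

lemma walsh_coeff {n m : ℕ} (hn : Even n) (hm : 0 < m) {ω : ℂ}
    (hω : IsPrimitiveRoot ω (2 ^ m))
    (f : (Fin n → ZMod 2) → ZMod (2 ^ m)) (hf : IsAntiSelfDualGBent ω f)
    (a : Fin (2 ^ (m - 1)) → (Fin n → ZMod 2) → ℤ)
    (ha : ∀ x, ω ^ (f x).val = ∑ i : Fin (2 ^ (m - 1)), (a i x : ℂ) * ω ^ (i : ℕ))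
    (j : Fin (2 ^ (m - 1))) (u : Fin n → ZMod 2) :
    (∑ x : Fin n → ZMod 2, chi u x * a j x) = -(2 ^ (n / 2)) * a j u := by
  have hW := hf u
  unfold Wgbf at hW
  have hL : ∑ x : Fin n → ZMod 2, (chi u x : ℂ) * ω ^ (f x).val
      = ∑ i : Fin (2 ^ (m - 1)),
          ((∑ x : Fin n → ZMod 2, chi u x * a i x : ℤ) : ℂ) * ω ^ (i : ℕ) := by
    calc ∑ x : Fin n → ZMod 2, (chi u x : ℂ) * ω ^ (f x).val
        = ∑ x : Fin n → ZMod 2, ∑ i : Fin (2 ^ (m - 1)),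
            (chi u x : ℂ) * ((a i x : ℂ) * ω ^ (i : ℕ)) := by
          refine Finset.sum_congr rfl fun x _ => ?_
          rw [ha x, Finset.mul_sum]
      _ = ∑ i : Fin (2 ^ (m - 1)), ∑ x : Fin n → ZMod 2,
            (chi u x : ℂ) * ((a i x : ℂ) * ω ^ (i : ℕ)) := Finset.sum_comm
      _ = ∑ i : Fin (2 ^ (m - 1)),
            ((∑ x : Fin n → ZMod 2, chi u x * a i x : ℤ) : ℂ) * ω ^ (i : ℕ) := by
          refine Finset.sum_congr rfl fun i _ => ?_
          push_cast
          rw [Finset.sum_mul]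
          exact Finset.sum_congr rfl fun x _ => (mul_assoc _ _ _).symm
  have hR : -((Real.sqrt 2 : ℂ) ^ n * ω ^ (f u).val)
      = ∑ i : Fin (2 ^ (m - 1)), ((-(2 ^ (n / 2)) * a i u : ℤ) : ℂ) * ω ^ (i : ℕ) := by
    rw [sqrt_two_pow_even hn, ha u, Finset.mul_sum, ← Finset.sum_neg_distrib]
    refine Finset.sum_congr rfl fun i _ => ?_
    push_cast
    ring
  have hzero : ∑ i : Fin (2 ^ (m - 1)),
      (((∑ x : Fin n → ZMod 2, chi u x * a i x) - (-(2 ^ (n / 2)) * a i u) : ℤ) : ℂ)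
        * ω ^ (i : ℕ) = 0 := by
    calc ∑ i : Fin (2 ^ (m - 1)),
        (((∑ x : Fin n → ZMod 2, chi u x * a i x) - (-(2 ^ (n / 2)) * a i u) : ℤ) : ℂ)
          * ω ^ (i : ℕ)
        = ∑ i : Fin (2 ^ (m - 1)),
            (((∑ x : Fin n → ZMod 2, chi u x * a i x : ℤ) : ℂ) * ω ^ (i : ℕ)
              - ((-(2 ^ (n / 2)) * a i u : ℤ) : ℂ) * ω ^ (i : ℕ)) := by
          refine Finset.sum_congr rfl fun i _ => ?_
          rw [Int.cast_sub]
          ring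
      _ = (∑ i : Fin (2 ^ (m - 1)), ((∑ x : Fin n → ZMod 2, chi u x * a i x : ℤ) : ℂ) * ω ^ (i : ℕ))
            - ∑ i : Fin (2 ^ (m - 1)), ((-(2 ^ (n / 2)) * a i u : ℤ) : ℂ) * ω ^ (i : ℕ) :=
          Finset.sum_sub_distrib _ _
      _ = 0 := by rw [← hL, ← hR, hW, sub_self]
  have := powers_lin_indep hm hω hzero j
  omega

/-- decomposition of an anti-self-dual bent gBF into anti-self-dual
bent Boolean functions. -/
theorem decomposition_of_antiselfdual_gbent {n m : ℕ} (hn : Even n) (hm : 1 < m)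
    (ω : ℂ) (hω : IsPrimitiveRoot ω (2 ^ m))
    (f : (Fin n → ZMod 2) → ZMod (2 ^ m)) (hf : IsAntiSelfDualGBent ω f)
    (a : Fin (2 ^ (m - 1)) → (Fin n → ZMod 2) → ℤ)
    (ha : ∀ x, ω ^ (f x).val = ∑ i : Fin (2 ^ (m - 1)), (a i x : ℂ) * ω ^ (i : ℕ))
    (G : Fin (2 ^ (m - 1)) → (Fin n → ZMod 2) → ℤ)
    (hG : ∀ x, (fun i => G i x) = (sylvester (m - 1)).mulVec fun i => a i x) :
    (∀ i x, G i x = 1 ∨ G i x = -1) ∧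
    ∃ g : Fin (2 ^ (m - 1)) → (Fin n → ZMod 2) → ZMod 2,
      (∀ i x, G i x = (-1) ^ (g i x).val) ∧
      (∀ i, IsAntiSelfDualBF (g i)) := by
  have hm0 : 0 < m := by omega
  have hGsum : ∀ i x, G i x = ∑ j, sylvester (m - 1) i j * a j x := by
    intro i x
    have := congrFun (hG x) i
    simpa [Matrix.mulVec, dotProduct] using this
  have syl_pm : ∀ i j : Fin (2 ^ (m - 1)),
      sylvester (m - 1) i j = 1 ∨ sylvester (m - 1) i j = -1 := by
    intro i j
    show ((-1 : ℤ) ^ _ = 1 ∨ _)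
    rcases Nat.even_or_odd (∑ t ∈ Finset.range (m - 1),
        ((i.val >>> t) % 2) * ((j.val >>> t) % 2)) with h | h
    · exact Or.inl (Even.neg_one_pow h)
    · exact Or.inr (Odd.neg_one_pow h)
  have hWG : ∀ i u, (∑ x : Fin n → ZMod 2, chi u x * G i x) = -(2 ^ (n / 2)) * G i u := by
    intro i u
    calc ∑ x : Fin n → ZMod 2, chi u x * G i x
        = ∑ x : Fin n → ZMod 2, ∑ j, sylvester (m - 1) i j * (chi u x * a j x) := by
          refine Finset.sum_congr rfl fun x _ => ?_
          rw [hGsum, Finset.mul_sum]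
          exact Finset.sum_congr rfl fun j _ => by ring
      _ = ∑ j, ∑ x : Fin n → ZMod 2, sylvester (m - 1) i j * (chi u x * a j x) :=
          Finset.sum_comm
      _ = ∑ j, sylvester (m - 1) i j * (-(2 ^ (n / 2)) * a j u) := by
          refine Finset.sum_congr rfl fun j _ => ?_
          rw [← Finset.mul_sum, walsh_coeff hn hm0 hω f hf a ha j u]
      _ = -(2 ^ (n / 2)) * ∑ j, sylvester (m - 1) i j * a j u := by
          rw [Finset.mul_sum]
          exact Finset.sum_congr rfl fun j _ => by ring
      _ = -(2 ^ (n / 2)) * G i u := by rw [← hGsum]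
  have hpm : ∀ i x, G i x = 1 ∨ G i x = -1 := by
    intro i x
    obtain ⟨ε, hε, c, hc⟩ := delta_form hm0 hω f a ha x
    have hGx : G i x = ε * sylvester (m - 1) i c := by
      rw [hGsum, Finset.sum_eq_single c]
      · rw [hc c]; simp [mul_comm]
      · intro b _ hb; rw [hc b]; simp [hb]
      · simp
    rcases hε with h1 | h1 <;> rcases syl_pm i c with h2 | h2 <;>
      rw [hGx, h1, h2] <;> norm_num
  refine ⟨hpm, fun i x => if G i x = 1 then 0 else 1, ?_, ?_⟩
  · intro i x
    by_cases h : G i x = 1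
    · simp [h]
    · have h' : G i x = -1 := (hpm i x).resolve_left h
      have : ((1 : ZMod 2)).val = 1 := rfl
      simp [h, h', this]
  · intro i
    have hsign : ∀ x, G i x
        = (-1 : ℤ) ^ ((if G i x = 1 then (0 : ZMod 2) else 1).val) := by
      intro x
      by_cases h : G i x = 1
      · simp [h]
      · have h' : G i x = -1 := (hpm i x).resolve_left h
        have : ((1 : ZMod 2)).val = 1 := rfl
        simp [h, h', this]
    have hW : ∀ u, Wbf (fun x => if G i x = 1 then (0 : ZMod 2) else 1) u
        = -(2 ^ (n / 2)) * G i u := by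
      intro u
      unfold Wbf
      rw [← hWG i u]
      exact Finset.sum_congr rfl fun x _ => by rw [← hsign x]
    constructor
    · intro u
      rcases hpm i u with h | h
      · right; rw [hW u, h]; ring
      · left; rw [hW u, h]; ring
    · intro u
      rw [hW u, ← hsign u]
      ring
end

section
/- Let n be even, m > 1, k = 2^{m−1}, and let f : 𝔽₂ⁿ → ℤ_{2^m} be a regular bent generalized Boolean function with dual f̂. Let a₀,…,a_{k−1} be the coefficient functions of f and b₀,…,b_{k−1} the coefficient functions of f̂. Then for every index i ∈ {0,…,k−1} and every u ∈ 𝔽₂ⁿ, Σ_{x∈𝔽₂ⁿ} (−1)^{u·x} aᵢ(x) = 2^{n/2} bᵢ(u). -/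
open Finset Matrix

lemma powers_indep {m : ℕ} (hm : 0 < m) (ω : ℂ) (hω : IsPrimitiveRoot ω (2 ^ m))
    (c : Fin (2 ^ (m - 1)) → ℤ)
    (hc : ∑ i : Fin (2 ^ (m - 1)), (c i : ℂ) * ω ^ (i : ℕ) = 0) : ∀ i, c i = 0 := by
  have hdeg : (minpoly ℚ ω).natDegree = 2 ^ (m - 1) := by
    rw [← Polynomial.cyclotomic_eq_minpoly_rat hω (pow_pos two_pos m),
      Polynomial.natDegree_cyclotomic, Nat.totient_prime_pow Nat.prime_two hm]
    simp
  have li := linearIndependent_pow (K := ℚ) (S := ℂ) ω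
  rw [hdeg] at li
  have := Fintype.linearIndependent_iff.1 li (fun i => (c i : ℚ)) ?_
  · intro i
    exact_mod_cast this i
  · rw [← hc]
    refine Finset.sum_congr rfl fun i _ => ?_
    rw [Rat.smul_def]
    push_cast
    ring

/-- the WHT of each coefficient function of a regular bent gBF equals
2^{n/2} times the corresponding coefficient function of the dual. -/
theorem coefficient_WHT_of_regular_gbent {n m : ℕ} (hn : Even n) (hm : 1 < m)
    (ω : ℂ) (hω : IsPrimitiveRoot ω (2 ^ m))
    (f fhat : (Fin n → ZMod 2) → ZMod (2 ^ m))
    (hbent : IsGBent ω f)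
    (hreg : ∀ u, Wgbf ω f u = (Real.sqrt 2 : ℂ) ^ n * ω ^ (fhat u).val)
    (a b : Fin (2 ^ (m - 1)) → (Fin n → ZMod 2) → ℤ)
    (ha : ∀ x, ω ^ (f x).val = ∑ i : Fin (2 ^ (m - 1)), (a i x : ℂ) * ω ^ (i : ℕ))
    (hb : ∀ u, ω ^ (fhat u).val = ∑ i : Fin (2 ^ (m - 1)), (b i u : ℂ) * ω ^ (i : ℕ)) :
    ∀ (i : Fin (2 ^ (m - 1))) (u : Fin n → ZMod 2),
      ∑ x : Fin n → ZMod 2, chi u x * a i x = 2 ^ (n / 2) * b i u := by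
  intro i u
  have hsqrt : ((Real.sqrt 2 : ℂ)) ^ n = (2 : ℂ) ^ (n / 2) := by
    obtain ⟨t, ht⟩ := hn
    have hnt : n = 2 * t := by omega
    subst hnt
    have h2 : (Real.sqrt 2 : ℂ) ^ 2 = 2 := by
      norm_cast
      rw [Real.sq_sqrt] ; norm_num
    rw [pow_mul, h2]
    congr 1
    omega
  have h1 : Wgbf ω f u = ∑ j : Fin (2 ^ (m - 1)),
      ((∑ x : Fin n → ZMod 2, chi u x * a j x : ℤ) : ℂ) * ω ^ (j : ℕ) := by
    unfold Wgbf
    simp_rw [ha, Finset.mul_sum]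
    rw [Finset.sum_comm]
    refine Finset.sum_congr rfl fun j _ => ?_
    push_cast
    rw [Finset.sum_mul]
    exact Finset.sum_congr rfl fun x _ => by ring
  have h2 : Wgbf ω f u = ∑ j : Fin (2 ^ (m - 1)),
      ((2 ^ (n / 2) * b j u : ℤ) : ℂ) * ω ^ (j : ℕ) := by
    rw [hreg u, hsqrt, hb u, Finset.mul_sum]
    refine Finset.sum_congr rfl fun j _ => ?_
    push_cast
    ring
  have key : ∑ j : Fin (2 ^ (m - 1)),
      (((∑ x : Fin n → ZMod 2, chi u x * a j x) - 2 ^ (n / 2) * b j u : ℤ) : ℂ) * ω ^ (j : ℕ) = 0 := by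
    have : ∀ j : Fin (2 ^ (m - 1)),
        (((∑ x : Fin n → ZMod 2, chi u x * a j x) - 2 ^ (n / 2) * b j u : ℤ) : ℂ) * ω ^ (j : ℕ)
        = ((∑ x : Fin n → ZMod 2, chi u x * a j x : ℤ) : ℂ) * ω ^ (j : ℕ)
          - ((2 ^ (n / 2) * b j u : ℤ) : ℂ) * ω ^ (j : ℕ) := by
      intro j; push_cast; ring
    simp_rw [this]
    rw [Finset.sum_sub_distrib, ← h1, ← h2, sub_self]
  have := powers_indep (by omega) ω hω _ key i
  omega
end
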